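/- arXiv:1106.1366 — 4 statements merged into one kernel-verified Lean document; each statement's English description precedes it below -/
import Mathlib

section
/- For all smooth maps g₁, g₂, g₃ : E → Aˣ, the 2-form λ satisfies the group 2-cocycle identity λ(g₁,g₂) + λ(g₁·g₂, g₃) = λ(g₂,g₃) + λ(g₁, g₂·g₃), where g₁·g₂ denotes the pointwise product. (This is the associativity of the product in the extension G̃_big of the group of smooth maps E → Aˣ by 2-forms.) -/
/-!
STATEMENT 0: The 2-form `λ(g₁,g₂)` satisfies the group 2-cocycle identity
`λ(g₁,g₂) + λ(g₁·g₂, g₃) = λ(g₂,g₃) + λ(g₁, g₂·g₃)` for smooth maps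
`g₁ g₂ g₃ : E → Aˣ` (associativity of the product in `G̃_big`).
-/

/-- A smooth map `E → Aˣ`, encoded as a smooth `A`-valued map with invertible values. -/
def SmoothUnitMap {E : Type*} [NormedAddCommGroup E] [NormedSpace ℝ E]
    {A : Type*} [NormedRing A] [NormedAlgebra ℝ A] (g : E → A) : Prop :=
  ContDiff ℝ (⊤ : ℕ∞) g ∧ ∀ x, IsUnit (g x)

/-- `α_g(x)v = g(x)⁻¹ * (D_v g)(x)`, the left logarithmic derivative. -/
noncomputable def alphaD {E : Type*} [NormedAddCommGroup E] [NormedSpace ℝ E]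
    {A : Type*} [NormedRing A] [NormedAlgebra ℝ A] (g : E → A) (x v : E) : A :=
  Ring.inverse (g x) * (fderiv ℝ g x v)

/-- `β_g(x)v = (D_v g)(x) * g(x)⁻¹`, the right logarithmic derivative. -/
noncomputable def betaD {E : Type*} [NormedAddCommGroup E] [NormedSpace ℝ E]
    {A : Type*} [NormedRing A] [NormedAlgebra ℝ A] (g : E → A) (x v : E) : A :=
  (fderiv ℝ g x v) * Ring.inverse (g x)

/-- The 2-form `λ(g₁,g₂)(x)(v,w) = (1/2)(⟨α_{g₁}(x)v, β_{g₂}(x)w⟩ − ⟨α_{g₁}(x)w, β_{g₂}(x)v⟩)`,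
given here by its value at `x` on a pair of vectors `v, w`. -/
noncomputable def lamForm {E : Type*} [NormedAddCommGroup E] [NormedSpace ℝ E]
    {A : Type*} [NormedRing A] [NormedAlgebra ℝ A]
    (B : A →ₗ[ℝ] A →ₗ[ℝ] ℝ) (g₁ g₂ : E → A) (x v w : E) : ℝ :=
  (1 / 2) * (B (alphaD g₁ x v) (betaD g₂ x w) - B (alphaD g₁ x w) (betaD g₂ x v))

section Aux
variable {E : Type*} [NormedAddCommGroup E] [NormedSpace ℝ E]
  {A : Type*} [NormedRing A] [NormedAlgebra ℝ A]

lemma ring_inverse_mul_of_units {a b : A} (u₁ : IsUnit a) (u₂ : IsUnit b) :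
    Ring.inverse (a * b) = Ring.inverse b * Ring.inverse a := by
  obtain ⟨a', ha⟩ := u₁; obtain ⟨b', hb⟩ := u₂
  rw [← ha, ← hb, ← Units.val_mul, Ring.inverse_unit, Ring.inverse_unit, Ring.inverse_unit,
    mul_inv_rev, Units.val_mul]

lemma alphaD_mul (g₁ g₂ : E → A) (x v : E)
    (d₁ : DifferentiableAt ℝ g₁ x) (d₂ : DifferentiableAt ℝ g₂ x)
    (u₁ : IsUnit (g₁ x)) (u₂ : IsUnit (g₂ x)) :
    alphaD (g₁ * g₂) x v
      = Ring.inverse (g₂ x) * alphaD g₁ x v * g₂ x + alphaD g₂ x v := by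
  have hf : fderiv ℝ (g₁ * g₂) x = g₁ x • fderiv ℝ g₂ x + (fderiv ℝ g₁ x).smulRight (g₂ x) := by
    have := fderiv_mul' d₁ d₂
    rw [this]; congr 1
  have hinv := ring_inverse_mul_of_units u₁ u₂
  simp only [alphaD, Pi.mul_apply, hf, hinv, ContinuousLinearMap.add_apply,
    ContinuousLinearMap.smul_apply, ContinuousLinearMap.smulRight_apply, smul_eq_mul]
  have h1 : Ring.inverse (g₁ x) * g₁ x = 1 := Ring.inverse_mul_cancel _ u₁
  rw [mul_add, add_comm]
  congr 1
  · rw [mul_assoc, mul_assoc, mul_assoc]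
  · rw [mul_assoc (Ring.inverse (g₂ x)), ← mul_assoc (Ring.inverse (g₁ x)), h1, one_mul]

lemma betaD_mul (g₁ g₂ : E → A) (x v : E)
    (d₁ : DifferentiableAt ℝ g₁ x) (d₂ : DifferentiableAt ℝ g₂ x)
    (u₁ : IsUnit (g₁ x)) (u₂ : IsUnit (g₂ x)) :
    betaD (g₁ * g₂) x v
      = betaD g₁ x v + g₁ x * betaD g₂ x v * Ring.inverse (g₁ x) := by
  have hf : fderiv ℝ (g₁ * g₂) x = g₁ x • fderiv ℝ g₂ x + (fderiv ℝ g₁ x).smulRight (g₂ x) := by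
    have := fderiv_mul' d₁ d₂
    rw [this]; congr 1
  have hinv := ring_inverse_mul_of_units u₁ u₂
  simp only [betaD, Pi.mul_apply, hf, hinv, ContinuousLinearMap.add_apply,
    ContinuousLinearMap.smul_apply, ContinuousLinearMap.smulRight_apply, smul_eq_mul]
  have h2 : g₂ x * Ring.inverse (g₂ x) = 1 := Ring.mul_inverse_cancel _ u₂
  rw [add_mul, add_comm]
  congr 1
  · rw [mul_assoc ((fderiv ℝ g₁ x) v), ← mul_assoc (g₂ x), h2, one_mul]
  · rw [mul_assoc (g₁ x), mul_assoc (g₁ x), mul_assoc ((fderiv ℝ g₂ x) v)]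

end Aux

theorem lamForm_cocycle
    {E : Type*} [NormedAddCommGroup E] [NormedSpace ℝ E]
    {A : Type*} [NormedRing A] [NormedAlgebra ℝ A] [CompleteSpace A]
    (B : A →ₗ[ℝ] A →ₗ[ℝ] ℝ)
    (Bcont : Continuous fun p : A × A => B p.1 p.2)
    (Bsymm : ∀ x y : A, B x y = B y x)
    (Binv : ∀ x y z : A, B (x * y) z = B x (y * z))
    (g₁ g₂ g₃ : E → A)
    (h₁ : SmoothUnitMap g₁) (h₂ : SmoothUnitMap g₂) (h₃ : SmoothUnitMap g₃) :
    ∀ (x v w : E),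
      lamForm B g₁ g₂ x v w + lamForm B (g₁ * g₂) g₃ x v w
        = lamForm B g₂ g₃ x v w + lamForm B g₁ (g₂ * g₃) x v w := by
  intro x v w
  have d₁ : DifferentiableAt ℝ g₁ x := (h₁.1.differentiable (by simp)).differentiableAt
  have d₂ : DifferentiableAt ℝ g₂ x := (h₂.1.differentiable (by simp)).differentiableAt
  have d₃ : DifferentiableAt ℝ g₃ x := (h₃.1.differentiable (by simp)).differentiableAt
  have u₁ := h₁.2 x
  have u₂ := h₂.2 x
  have u₃ := h₃.2 x
  -- conjugation identity for B
  have conj : ∀ a b : A,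
      B (Ring.inverse (g₂ x) * a * g₂ x) b = B a (g₂ x * b * Ring.inverse (g₂ x)) := by
    intro a b
    rw [Binv, Binv, Bsymm, ← mul_assoc, Binv, Binv, ← mul_assoc]
  simp only [lamForm,
    alphaD_mul g₁ g₂ x v d₁ d₂ u₁ u₂, alphaD_mul g₁ g₂ x w d₁ d₂ u₁ u₂,
    betaD_mul g₂ g₃ x v d₂ d₃ u₂ u₃, betaD_mul g₂ g₃ x w d₂ d₃ u₂ u₃,
    map_add, LinearMap.add_apply]
  rw [conj (alphaD g₁ x v) (betaD g₃ x w), conj (alphaD g₁ x w) (betaD g₃ x v)]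
  ring
end

section
/- Closedness of the moduli-space symplectic form for a colored square: let 𝔥₁, 𝔥₂, 𝔥₃, 𝔥₄ ⊆ A be isotropic subalgebras and let g₁, g₂, g₃, g₄ : E → Aˣ be smooth maps such that α_{g_i}(x)v ∈ 𝔥_i for all x, v, and such that g₁·g₂ = g₃·g₄ pointwise. Then the 2-form ω = λ(g₁,g₂) − λ(g₃,g₄) is closed: dω = 0. (For a Manin triple 𝔯, 𝔟 with 𝔥₁ = 𝔥₄ = 𝔯 and 𝔥₂ = 𝔥₃ = 𝔟 this is the closedness of the symplectic form ω = (1/2)⟨r₁⁻¹dr₁ ∧ db₁ b₁⁻¹⟩ − (1/2)⟨b₂⁻¹db₂ ∧ dr₂ r₂⁻¹⟩ of the Lu–Weinstein double symplectic groupoid; allowing 𝔥₄ = 𝔳 a third isotropic subalgebra gives Lu's symplectic groupoid of the associated Poisson homogeneous space.) -/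
/-- Exterior derivative of a 2-form given by its values:
`dω(x)(v₀,v₁,v₂) = D_{v₀}ω(·)(v₁,v₂) − D_{v₁}ω(·)(v₀,v₂) + D_{v₂}ω(·)(v₀,v₁)`. -/
noncomputable def extDeriv2 {E : Type*} [NormedAddCommGroup E] [NormedSpace ℝ E]
    (ω : E → E → E → ℝ) (x v₀ v₁ v₂ : E) : ℝ :=
  fderiv ℝ (fun y => ω y v₁ v₂) x v₀
    - fderiv ℝ (fun y => ω y v₀ v₂) x v₁
    + fderiv ℝ (fun y => ω y v₀ v₁) x v₂

/-- An isotropic subalgebra of `A`: a subspace `𝔥` with `[𝔥,𝔥] ⊆ 𝔥` and `⟨𝔥,𝔥⟩ = 0`. -/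
def IsIsotropicSubalg {A : Type*} [NormedRing A] [NormedAlgebra ℝ A]
    (B : A →ₗ[ℝ] A →ₗ[ℝ] ℝ) (𝔥 : Submodule ℝ A) : Prop :=
  (∀ a ∈ 𝔥, ∀ b ∈ 𝔥, a * b - b * a ∈ 𝔥) ∧ (∀ a ∈ 𝔥, ∀ b ∈ 𝔥, B a b = 0)


section SquareFormAux

variable {E : Type*} [NormedAddCommGroup E] [NormedSpace ℝ E]
variable {A : Type*} [NormedRing A] [NormedAlgebra ℝ A]

set_option linter.unusedSectionVars false

theorem sq_bilin_bound (B : A →ₗ[ℝ] A →ₗ[ℝ] ℝ)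
    (Bcont : Continuous fun p : A × A => B p.1 p.2) :
    ∃ C : ℝ, ∀ x y : A, ‖B x y‖ ≤ C * ‖x‖ * ‖y‖ := by
  have h0 : ContinuousAt (fun p : A × A => B p.1 p.2) 0 := Bcont.continuousAt
  rw [Metric.continuousAt_iff] at h0
  obtain ⟨δ, hδ, h⟩ := h0 1 zero_lt_one
  simp only [Prod.fst_zero, Prod.snd_zero, map_zero, LinearMap.zero_apply, dist_zero_right] at h
  refine ⟨(2/δ) * (2/δ), fun x y => ?_⟩
  rcases eq_or_ne x 0 with rfl | hx
  · simp
  rcases eq_or_ne y 0 with rfl | hy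
  · simp
  have hnx : (0:ℝ) < ‖x‖ := norm_pos_iff.2 hx
  have hny : (0:ℝ) < ‖y‖ := norm_pos_iff.2 hy
  have hdist : ‖(((δ/2/‖x‖) • x, (δ/2/‖y‖) • y) : A × A)‖ < δ := by
    rw [Prod.norm_def]
    simp only [norm_smul, Real.norm_eq_abs]
    rw [max_lt_iff]
    constructor <;>
    · rw [abs_of_pos (by positivity), div_mul_cancel₀ _ (by positivity)]
      linarith
  have h2 := h hdist
  simp only [map_smul, LinearMap.smul_apply, smul_eq_mul, norm_mul, Real.norm_eq_abs,
    abs_of_pos (show (0:ℝ) < δ/2/‖x‖ by positivity),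
    abs_of_pos (show (0:ℝ) < δ/2/‖y‖ by positivity)] at h2
  have h3 : δ * δ * ‖B x y‖ < 4 * (‖x‖ * ‖y‖) := by
    have e : δ/2/‖y‖ * (δ/2/‖x‖ * |B x y|) = (δ * δ * ‖B x y‖) / (4 * (‖x‖*‖y‖)) := by
      rw [Real.norm_eq_abs]; field_simp; ring
    rw [e, div_lt_one (by positivity)] at h2; exact h2
  rw [show 2/δ*(2/δ)*‖x‖*‖y‖ = 4*(‖x‖*‖y‖)/(δ*δ) by field_simp; ring,
    le_div_iff₀ (by positivity)]
  nlinarith [h3, norm_nonneg (B x y)]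

theorem sq_inv_coe {g : E → A} (hg : SmoothUnitMap g) (x : E) :
    (((hg.2 x).unit⁻¹ : Aˣ) : A) = Ring.inverse (g x) := by
  rw [← Ring.inverse_unit, (hg.2 x).unit_spec]

variable [CompleteSpace A]

theorem sq_hasFDerivAt_inv {g : E → A} (hg : SmoothUnitMap g) (x : E) :
    HasFDerivAt (fun y => Ring.inverse (g y))
      ((-(ContinuousLinearMap.mulLeftRight ℝ A (Ring.inverse (g x))
          (Ring.inverse (g x)))).comp (fderiv ℝ g x)) x := by
  have hgd : HasFDerivAt g (fderiv ℝ g x) x :=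
    ((hg.1.differentiable (by simp)) x).hasFDerivAt
  have h := hasFDerivAt_ringInverse (𝕜 := ℝ) (hg.2 x).unit
  rw [sq_inv_coe hg x, (hg.2 x).unit_spec] at h
  exact h.comp x hgd

theorem sq_hasFDerivAt_fda {g : E → A} (hg : SmoothUnitMap g) (x v : E) :
    HasFDerivAt (fun y => fderiv ℝ g y v)
      ((fderiv ℝ (fderiv ℝ g) x).flip v) x := by
  have hdg : HasFDerivAt (fderiv ℝ g) (fderiv ℝ (fderiv ℝ g) x) x :=
    (((hg.1.fderiv_right (m := 1) (WithTop.coe_le_coe.2 (le_top : ((1 + 1 : ℕ) : ℕ∞) ≤ ⊤))).differentiable one_ne_zero) x).hasFDerivAt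
  simpa using hdg.clm_apply (hasFDerivAt_const v x)

set_option maxHeartbeats 1000000 in
theorem sq_keyD (B : A →ₗ[ℝ] A →ₗ[ℝ] ℝ)
    (hBb : ∃ C : ℝ, ∀ x y : A, ‖B x y‖ ≤ C * ‖x‖ * ‖y‖)
    {g₁ g₂ : E → A} (hg₁ : SmoothUnitMap g₁) (hg₂ : SmoothUnitMap g₂)
    (x v w : E) :
    DifferentiableAt ℝ (fun y => B (alphaD g₁ y v) (betaD g₂ y w)) x ∧
    ∀ u, fderiv ℝ (fun y => B (alphaD g₁ y v) (betaD g₂ y w)) x u =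
        B (Ring.inverse (g₁ x) * fderiv ℝ (fderiv ℝ g₁) x u v) (betaD g₂ x w)
        - B (alphaD g₁ x u * alphaD g₁ x v) (betaD g₂ x w)
        + B (alphaD g₁ x v) (fderiv ℝ (fderiv ℝ g₂) x u w * Ring.inverse (g₂ x))
        - B (alphaD g₁ x v) (betaD g₂ x w * betaD g₂ x u) := by
  set B' : A →L[ℝ] A →L[ℝ] ℝ := LinearMap.mkContinuousOfExistsBound₂ B hBb with hB'
  have hB'app : ∀ a b : A, B' a b = B a b := fun a b => rfl
  have hp : HasFDerivAt (fun y => alphaD g₁ y v) _ x :=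
    (sq_hasFDerivAt_inv hg₁ x).mul' (sq_hasFDerivAt_fda hg₁ x v)
  have hq : HasFDerivAt (fun y => betaD g₂ y w) _ x :=
    (sq_hasFDerivAt_fda hg₂ x w).mul' (sq_hasFDerivAt_inv hg₂ x)
  have hc : HasFDerivAt (fun y => B' (alphaD g₁ y v)) _ x :=
    B'.hasFDerivAt.comp x hp
  have hF := hc.clm_apply hq
  have hF' : HasFDerivAt (fun y => B (alphaD g₁ y v) (betaD g₂ y w)) _ x := hF
  refine ⟨hF'.differentiableAt, fun u => ?_⟩
  rw [hF'.fderiv]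
  simp only [ContinuousLinearMap.add_apply, ContinuousLinearMap.coe_comp',
    Function.comp_apply, ContinuousLinearMap.flip_apply,
    ContinuousLinearMap.smul_apply, ContinuousLinearMap.smulRight_apply,
    ContinuousLinearMap.neg_apply, ContinuousLinearMap.mulLeftRight_apply,
    ContinuousLinearMap.zero_apply, hB'app, smul_eq_mul, op_smul_eq_mul]
  simp only [neg_mul, mul_neg, map_add, map_neg, map_smul, LinearMap.add_apply,
    LinearMap.neg_apply, LinearMap.smul_apply, smul_eq_mul, alphaD, betaD, mul_assoc]
  ring

theorem sq_symm {g : E → A} (hg : SmoothUnitMap g) (x p q : E) :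
    fderiv ℝ (fderiv ℝ g) x p q = fderiv ℝ (fderiv ℝ g) x q p :=
  second_derivative_symmetric
    (fun y => ((hg.1.differentiable (by simp)) y).hasFDerivAt)
    ((((hg.1.fderiv_right (m := 1) (WithTop.coe_le_coe.2 (le_top : ((1 + 1 : ℕ) : ℕ∞) ≤ ⊤))).differentiable one_ne_zero) x).hasFDerivAt) p q

set_option maxHeartbeats 1000000 in
theorem sq_extD_lam (B : A →ₗ[ℝ] A →ₗ[ℝ] ℝ)
    (hBb : ∃ C : ℝ, ∀ x y : A, ‖B x y‖ ≤ C * ‖x‖ * ‖y‖)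
    {g₁ g₂ : E → A} (hg₁ : SmoothUnitMap g₁) (hg₂ : SmoothUnitMap g₂)
    (x u v w : E) :
    extDeriv2 (fun y v w => lamForm B g₁ g₂ y v w) x u v w =
    (1/2) * (
      - B (alphaD g₁ x u * alphaD g₁ x v) (betaD g₂ x w)
      - B (alphaD g₁ x v) (betaD g₂ x w * betaD g₂ x u)
      + B (alphaD g₁ x u * alphaD g₁ x w) (betaD g₂ x v)
      + B (alphaD g₁ x w) (betaD g₂ x v * betaD g₂ x u)
      + B (alphaD g₁ x v * alphaD g₁ x u) (betaD g₂ x w)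
      + B (alphaD g₁ x u) (betaD g₂ x w * betaD g₂ x v)
      - B (alphaD g₁ x v * alphaD g₁ x w) (betaD g₂ x u)
      - B (alphaD g₁ x w) (betaD g₂ x u * betaD g₂ x v)
      - B (alphaD g₁ x w * alphaD g₁ x u) (betaD g₂ x v)
      - B (alphaD g₁ x u) (betaD g₂ x v * betaD g₂ x w)
      + B (alphaD g₁ x w * alphaD g₁ x v) (betaD g₂ x u)
      + B (alphaD g₁ x v) (betaD g₂ x u * betaD g₂ x w)) := by
  have dF := fun v w => sq_keyD B hBb hg₁ hg₂ x v w
  have hL : ∀ (d v w : E), fderiv ℝ (fun y => lamForm B g₁ g₂ y v w) x d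
      = (1/2) * (fderiv ℝ (fun y => B (alphaD g₁ y v) (betaD g₂ y w)) x d
               - fderiv ℝ (fun y => B (alphaD g₁ y w) (betaD g₂ y v)) x d) := by
    intro d v w
    have h1 := (dF v w).1
    have h2 := (dF w v).1
    have e : (fun y => lamForm B g₁ g₂ y v w)
        = fun y => (1/2 : ℝ) * ((fun y => B (alphaD g₁ y v) (betaD g₂ y w)) y
            - (fun y => B (alphaD g₁ y w) (betaD g₂ y v)) y) := rfl
    rw [e, fderiv_const_mul (h1.fun_sub h2), fderiv_fun_sub h1 h2]
    simp
  simp only [extDeriv2]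
  rw [hL u v w, hL v u w, hL w u v, (dF v w).2 u, (dF w v).2 u, (dF u w).2 v,
    (dF w u).2 v, (dF u v).2 w, (dF v u).2 w,
    sq_symm hg₁ x v u, sq_symm hg₁ x w u, sq_symm hg₁ x w v,
    sq_symm hg₂ x v u, sq_symm hg₂ x w u, sq_symm hg₂ x w v]
  ring

theorem sq_lam_diffAt (B : A →ₗ[ℝ] A →ₗ[ℝ] ℝ)
    (hBb : ∃ C : ℝ, ∀ x y : A, ‖B x y‖ ≤ C * ‖x‖ * ‖y‖)
    {g₁ g₂ : E → A} (hg₁ : SmoothUnitMap g₁) (hg₂ : SmoothUnitMap g₂)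
    (x v w : E) :
    DifferentiableAt ℝ (fun y => lamForm B g₁ g₂ y v w) x := by
  have h1 := (sq_keyD B hBb hg₁ hg₂ x v w).1
  have h2 := (sq_keyD B hBb hg₁ hg₂ x w v).1
  exact (h1.sub h2).const_mul _

theorem sq_twelve (B : A →ₗ[ℝ] A →ₗ[ℝ] ℝ)
    (Bsymm : ∀ x y : A, B x y = B y x)
    (Binv : ∀ x y z : A, B (x * y) z = B x (y * z))
    (au av aw bu bv bw : A) :
    (- B (au*av) bw - B av (bw*bu) + B (au*aw) bv + B aw (bv*bu)
     + B (av*au) bw + B au (bw*bv) - B (av*aw) bu - B aw (bu*bv)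
     - B (aw*au) bv - B au (bv*bw) + B (aw*av) bu + B av (bu*bw))
    = B au (av*aw - aw*av) + B bu (bv*bw - bw*bv)
      - B (au+bu) ((av+bv)*(aw+bw) - (aw+bw)*(av+bv)) := by
  have cyc : ∀ x y z : A, B x (y*z) = B z (x*y) := fun x y z => by
    rw [← Binv, Bsymm]
  have cyc2 : ∀ x y z : A, B x (y*z) = B y (z*x) := fun x y z => by
    rw [cyc, cyc]
  simp only [mul_add, add_mul, map_add, map_sub, LinearMap.add_apply, LinearMap.sub_apply]
  linear_combination (-1 : ℝ) * Binv au av bw + Binv au aw bv + Binv av au bw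
    - Binv av aw bu - Binv aw au bv + Binv aw av bu
    - cyc av bw bu + cyc aw bv bu + cyc2 av au bw - cyc av aw bu
    - cyc2 aw bu bv - cyc2 aw au bv + cyc aw av bu + cyc2 av bu bw

theorem sq_BAd (B : A →ₗ[ℝ] A →ₗ[ℝ] ℝ)
    (Bsymm : ∀ x y : A, B x y = B y x)
    (Binv : ∀ x y z : A, B (x * y) z = B x (y * z))
    {c : A} (hc : IsUnit c) (x y : A) :
    B (c * x * Ring.inverse c) (c * y * Ring.inverse c) = B x y := by
  have hic : Ring.inverse c * c = 1 := Ring.inverse_mul_cancel c hc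
  rw [Binv (c*x) (Ring.inverse c) _, Binv c x _,
    show Ring.inverse c * (c * y * Ring.inverse c) = y * Ring.inverse c by
      rw [← mul_assoc, ← mul_assoc, hic, one_mul],
    show x * (y * Ring.inverse c) = (x * y) * Ring.inverse c by rw [mul_assoc],
    ← Binv c (x*y) (Ring.inverse c), Bsymm, ← Binv (Ring.inverse c) c (x*y), hic,
    ← Binv 1 x y, one_mul]

theorem sq_conj_mul {c : A} (hc : IsUnit c) (x y : A) :
    (c * x * Ring.inverse c) * (c * y * Ring.inverse c) = c * (x * y) * Ring.inverse c := by
  have h1 : Ring.inverse c * c = 1 := Ring.inverse_mul_cancel c hc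
  simp only [mul_assoc]
  rw [← mul_assoc (Ring.inverse c) c, h1, one_mul]

theorem sq_conj_form (B : A →ₗ[ℝ] A →ₗ[ℝ] ℝ)
    (Bsymm : ∀ x y : A, B x y = B y x)
    (Binv : ∀ x y z : A, B (x * y) z = B x (y * z))
    {c : A} (hc : IsUnit c) (X Y Z : A) :
    B (c * X * Ring.inverse c)
      ((c * Y * Ring.inverse c) * (c * Z * Ring.inverse c)
        - (c * Z * Ring.inverse c) * (c * Y * Ring.inverse c))
    = B X (Y * Z - Z * Y) := by
  rw [sq_conj_mul hc, sq_conj_mul hc,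
    show c * (Y*Z) * Ring.inverse c - c * (Z*Y) * Ring.inverse c
        = c * (Y*Z - Z*Y) * Ring.inverse c by rw [mul_sub, sub_mul],
    sq_BAd B Bsymm Binv hc]

theorem sq_betaD_eq {g : E → A} (hg : SmoothUnitMap g) (x t : E) :
    betaD g x t = g x * alphaD g x t * Ring.inverse (g x) := by
  rw [alphaD, betaD, ← mul_assoc, Ring.mul_inverse_cancel (g x) (hg.2 x), one_mul]

theorem sq_inv_mul {a b : A} (ha : IsUnit a) (hb : IsUnit b) :
    Ring.inverse (a * b) = Ring.inverse b * Ring.inverse a := by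
  rw [← ha.unit_spec, ← hb.unit_spec, ← Units.val_mul, Ring.inverse_unit,
    Ring.inverse_unit, Ring.inverse_unit, mul_inv_rev, Units.val_mul]

theorem sq_alpha_beta_sum {g₁ g₂ : E → A} (hg₁ : SmoothUnitMap g₁) (hg₂ : SmoothUnitMap g₂)
    (x t : E) :
    alphaD g₁ x t + betaD g₂ x t
      = g₂ x * alphaD (g₁ * g₂) x t * Ring.inverse (g₂ x) := by
  have hd₁ : HasFDerivAt g₁ (fderiv ℝ g₁ x) x := ((hg₁.1.differentiable (by simp)) x).hasFDerivAt
  have hd₂ : HasFDerivAt g₂ (fderiv ℝ g₂ x) x := ((hg₂.1.differentiable (by simp)) x).hasFDerivAt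
  have hprod : HasFDerivAt (g₁ * g₂)
      (g₁ x • fderiv ℝ g₂ x + (fderiv ℝ g₁ x).smulRight (g₂ x)) x := hd₁.mul' hd₂
  have hfd : fderiv ℝ (g₁ * g₂) x t = g₁ x * fderiv ℝ g₂ x t + fderiv ℝ g₁ x t * g₂ x := by
    rw [hprod.fderiv]; simp [smul_eq_mul]
  have h2 : (g₁ * g₂) x = g₁ x * g₂ x := rfl
  rw [alphaD, alphaD, betaD, hfd, h2, sq_inv_mul (hg₁.2 x) (hg₂.2 x)]
  have c1 : g₂ x * Ring.inverse (g₂ x) = 1 := Ring.mul_inverse_cancel _ (hg₂.2 x)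
  have c2 : Ring.inverse (g₁ x) * g₁ x = 1 := Ring.inverse_mul_cancel _ (hg₁.2 x)
  simp only [mul_add, add_mul, mul_assoc]
  rw [← mul_assoc (g₂ x) (Ring.inverse (g₂ x)), c1, one_mul,
    ← mul_assoc (Ring.inverse (g₁ x)) (g₁ x), c2, one_mul,
    ← mul_assoc (g₂ x) (Ring.inverse (g₂ x)), c1, one_mul]
  rw [add_comm]
  congr 1
  · rw [mul_one]

end SquareFormAux

theorem square_form_closed
    {E : Type*} [NormedAddCommGroup E] [NormedSpace ℝ E]
    {A : Type*} [NormedRing A] [NormedAlgebra ℝ A] [CompleteSpace A]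
    (B : A →ₗ[ℝ] A →ₗ[ℝ] ℝ)
    (Bcont : Continuous fun p : A × A => B p.1 p.2)
    (Bsymm : ∀ x y : A, B x y = B y x)
    (Binv : ∀ x y z : A, B (x * y) z = B x (y * z))
    (𝔥₁ 𝔥₂ 𝔥₃ 𝔥₄ : Submodule ℝ A)
    (h𝔥₁ : IsIsotropicSubalg B 𝔥₁) (h𝔥₂ : IsIsotropicSubalg B 𝔥₂)
    (h𝔥₃ : IsIsotropicSubalg B 𝔥₃) (h𝔥₄ : IsIsotropicSubalg B 𝔥₄)
    (g₁ g₂ g₃ g₄ : E → A)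
    (h₁ : SmoothUnitMap g₁) (h₂ : SmoothUnitMap g₂)
    (h₃ : SmoothUnitMap g₃) (h₄ : SmoothUnitMap g₄)
    (hα₁ : ∀ x v : E, alphaD g₁ x v ∈ 𝔥₁) (hα₂ : ∀ x v : E, alphaD g₂ x v ∈ 𝔥₂)
    (hα₃ : ∀ x v : E, alphaD g₃ x v ∈ 𝔥₃) (hα₄ : ∀ x v : E, alphaD g₄ x v ∈ 𝔥₄)
    (hrel : g₁ * g₂ = g₃ * g₄) :
    ∀ x u v w : E,
      extDeriv2 (fun x v w => lamForm B g₁ g₂ x v w - lamForm B g₃ g₄ x v w) x u v w = 0 := by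
  intro x u v w
  have hBb := sq_bilin_bound B Bcont
  have hd12 : ∀ (v w : E), DifferentiableAt ℝ (fun y => lamForm B g₁ g₂ y v w) x :=
    fun v w => sq_lam_diffAt B hBb h₁ h₂ x v w
  have hd34 : ∀ (v w : E), DifferentiableAt ℝ (fun y => lamForm B g₃ g₄ y v w) x :=
    fun v w => sq_lam_diffAt B hBb h₃ h₄ x v w
  have hsplit : extDeriv2 (fun x v w => lamForm B g₁ g₂ x v w - lamForm B g₃ g₄ x v w) x u v w
      = extDeriv2 (fun y v w => lamForm B g₁ g₂ y v w) x u v w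
        - extDeriv2 (fun y v w => lamForm B g₃ g₄ y v w) x u v w := by
    simp only [extDeriv2]
    rw [fderiv_fun_sub (hd12 v w) (hd34 v w), fderiv_fun_sub (hd12 u w) (hd34 u w),
      fderiv_fun_sub (hd12 u v) (hd34 u v)]
    simp only [ContinuousLinearMap.sub_apply]
    ring
  rw [hsplit, sq_extD_lam B hBb h₁ h₂ x u v w, sq_extD_lam B hBb h₃ h₄ x u v w,
    sq_twelve B Bsymm Binv (alphaD g₁ x u) (alphaD g₁ x v) (alphaD g₁ x w)
      (betaD g₂ x u) (betaD g₂ x v) (betaD g₂ x w),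
    sq_twelve B Bsymm Binv (alphaD g₃ x u) (alphaD g₃ x v) (alphaD g₃ x w)
      (betaD g₄ x u) (betaD g₄ x v) (betaD g₄ x w)]
  have hA1 : B (alphaD g₁ x u) (alphaD g₁ x v * alphaD g₁ x w
      - alphaD g₁ x w * alphaD g₁ x v) = 0 :=
    h𝔥₁.2 _ (hα₁ x u) _ (h𝔥₁.1 _ (hα₁ x v) _ (hα₁ x w))
  have hA3 : B (alphaD g₃ x u) (alphaD g₃ x v * alphaD g₃ x w
      - alphaD g₃ x w * alphaD g₃ x v) = 0 :=
    h𝔥₃.2 _ (hα₃ x u) _ (h𝔥₃.1 _ (hα₃ x v) _ (hα₃ x w))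
  have hB2 : B (betaD g₂ x u) (betaD g₂ x v * betaD g₂ x w
      - betaD g₂ x w * betaD g₂ x v) = 0 := by
    rw [sq_betaD_eq h₂ x u, sq_betaD_eq h₂ x v, sq_betaD_eq h₂ x w,
      sq_conj_form B Bsymm Binv (h₂.2 x)]
    exact h𝔥₂.2 _ (hα₂ x u) _ (h𝔥₂.1 _ (hα₂ x v) _ (hα₂ x w))
  have hB4 : B (betaD g₄ x u) (betaD g₄ x v * betaD g₄ x w
      - betaD g₄ x w * betaD g₄ x v) = 0 := by
    rw [sq_betaD_eq h₄ x u, sq_betaD_eq h₄ x v, sq_betaD_eq h₄ x w,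
      sq_conj_form B Bsymm Binv (h₄.2 x)]
    exact h𝔥₄.2 _ (hα₄ x u) _ (h𝔥₄.1 _ (hα₄ x v) _ (hα₄ x w))
  have hM12 : B (alphaD g₁ x u + betaD g₂ x u)
      ((alphaD g₁ x v + betaD g₂ x v) * (alphaD g₁ x w + betaD g₂ x w)
        - (alphaD g₁ x w + betaD g₂ x w) * (alphaD g₁ x v + betaD g₂ x v))
      = B (alphaD (g₁ * g₂) x u) (alphaD (g₁ * g₂) x v * alphaD (g₁ * g₂) x w
          - alphaD (g₁ * g₂) x w * alphaD (g₁ * g₂) x v) := by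
    rw [sq_alpha_beta_sum h₁ h₂ x u, sq_alpha_beta_sum h₁ h₂ x v,
      sq_alpha_beta_sum h₁ h₂ x w, sq_conj_form B Bsymm Binv (h₂.2 x)]
  have hM34 : B (alphaD g₃ x u + betaD g₄ x u)
      ((alphaD g₃ x v + betaD g₄ x v) * (alphaD g₃ x w + betaD g₄ x w)
        - (alphaD g₃ x w + betaD g₄ x w) * (alphaD g₃ x v + betaD g₄ x v))
      = B (alphaD (g₃ * g₄) x u) (alphaD (g₃ * g₄) x v * alphaD (g₃ * g₄) x w
          - alphaD (g₃ * g₄) x w * alphaD (g₃ * g₄) x v) := by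
    rw [sq_alpha_beta_sum h₃ h₄ x u, sq_alpha_beta_sum h₃ h₄ x v,
      sq_alpha_beta_sum h₃ h₄ x w, sq_conj_form B Bsymm Binv (h₄.2 x)]
  rw [hA1, hA3, hB2, hB4, hM12, hM34, hrel]
  ring
end

section
/- Closedness of the symplectic form for a colored triangle: let 𝔯, 𝔟, 𝔳 ⊆ A be isotropic subalgebras and let r, b, v : E → Aˣ be smooth maps with α_r valued in 𝔯, α_b valued in 𝔟, α_v valued in 𝔳, and with r·b·v = 1 pointwise. Then λ(r·b, v) = 0, and the 2-form ω = λ(r,b) + λ(r·b, v) = λ(r,b) is closed: dω = 0. (This is the symplectic form on the moduli space {(r,b,v) ∈ R×B×V : rbv = 1} of the triangle colored by 𝔯, 𝔟, 𝔳.) -/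
section AuxLemmas

variable {E : Type*} [NormedAddCommGroup E] [NormedSpace ℝ E]
variable {A : Type*} [NormedRing A] [NormedAlgebra ℝ A]

/-- A continuous bilinear form is a bounded bilinear map. -/
lemma aux_bdd (B : A →ₗ[ℝ] A →ₗ[ℝ] ℝ) (Bcont : Continuous fun p : A × A => B p.1 p.2) :
    IsBoundedBilinearMap ℝ (fun p : A × A => B p.1 p.2) := by
  refine ⟨fun x₁ x₂ y => by simp, fun c x y => by simp, fun x y₁ y₂ => by simp,
    fun c x y => by simp, ?_⟩
  obtain ⟨δ, δpos, hδ⟩ := Metric.continuousAt_iff.mp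
    (Bcont.continuousAt (x := ((0 : A), (0 : A)))) 1 one_pos
  refine ⟨4 / (δ * δ), by positivity, fun x y => ?_⟩
  rcases eq_or_ne x 0 with rfl | hx
  · simp
  rcases eq_or_ne y 0 with rfl | hy
  · simp
  have hxp : (0:ℝ) < ‖x‖ := norm_pos_iff.mpr hx
  have hyp : (0:ℝ) < ‖y‖ := norm_pos_iff.mpr hy
  set s : ℝ := δ / (2 * ‖x‖) with hs
  set t : ℝ := δ / (2 * ‖y‖) with ht
  have hsp : 0 < s := by positivity
  have htp : 0 < t := by positivity
  have hns : ‖s • x‖ = δ / 2 := by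
    rw [norm_smul, Real.norm_eq_abs, abs_of_pos hsp, hs]
    field_simp
  have hnt : ‖t • y‖ = δ / 2 := by
    rw [norm_smul, Real.norm_eq_abs, abs_of_pos htp, ht]
    field_simp
  have hdist : dist ((s • x, t • y) : A × A) ((0 : A), (0 : A)) < δ := by
    rw [Prod.dist_eq]
    simp only [dist_zero_right, hns, hnt]
    simp [max_self]
    linarith
  have h1 := hδ hdist
  simp only [map_smul, LinearMap.smul_apply, map_zero, LinearMap.zero_apply,
    smul_eq_mul, dist_zero_right] at h1
  have h2 : s * t * |B x y| < 1 := by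
    calc s * t * |B x y| = ‖t * (s * B x y)‖ := by
          rw [Real.norm_eq_abs, abs_mul, abs_mul, abs_of_pos hsp, abs_of_pos htp]; ring
      _ < 1 := h1
  have hst : s * t = δ * δ / (4 * ‖x‖ * ‖y‖) := by rw [hs, ht]; field_simp; ring
  rw [hst, div_mul_eq_mul_div, div_lt_one (by positivity)] at h2
  have : |B x y| ≤ 4 / (δ * δ) * ‖x‖ * ‖y‖ := by
    rw [div_mul_eq_mul_div, div_mul_eq_mul_div, le_div_iff₀ (by positivity)]
    nlinarith [abs_nonneg (B x y)]
  simpa [Real.norm_eq_abs] using this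

/-- Cyclic invariance of an invariant symmetric bilinear form. -/
lemma aux_cyc (B : A →ₗ[ℝ] A →ₗ[ℝ] ℝ) (Bsymm : ∀ x y : A, B x y = B y x)
    (Binv : ∀ x y z : A, B (x * y) z = B x (y * z)) (x y z : A) :
    B (x * y) z = B (y * z) x := by rw [Binv, Bsymm]

/-- Conjugation invariance of an invariant symmetric bilinear form. -/
lemma aux_conj (B : A →ₗ[ℝ] A →ₗ[ℝ] ℝ) (Bsymm : ∀ x y : A, B x y = B y x)
    (Binv : ∀ x y z : A, B (x * y) z = B x (y * z))
    {g gi : A} (h : gi * g = 1) (x y : A) :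
    B (g * x * gi) (g * y * gi) = B x y := by
  calc B (g * x * gi) (g * y * gi) = B (g * x) (gi * (g * y * gi)) := Binv _ _ _
    _ = B (g * x) (y * gi) := by
        rw [show gi * (g * y * gi) = (gi * g) * (y * gi) by rw [mul_assoc, ← mul_assoc gi g],
          h, one_mul]
    _ = B g (x * (y * gi)) := Binv _ _ _
    _ = B g ((x * y) * gi) := by rw [mul_assoc]
    _ = B (g * (x * y)) gi := (Binv _ _ _).symm
    _ = B gi (g * (x * y)) := Bsymm _ _
    _ = B (gi * g) (x * y) := (Binv _ _ _).symm
    _ = B ((1 : A) * x) y := by rw [h, Binv]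
    _ = B x y := by rw [one_mul]

variable [CompleteSpace A]

lemma aux_inv_hasFDerivAt {g : E → A} (hg : SmoothUnitMap g) (x : E) :
    HasFDerivAt (fun y => Ring.inverse (g y))
      ((-ContinuousLinearMap.mulLeftRight ℝ A (Ring.inverse (g x)) (Ring.inverse (g x))).comp
        (fderiv ℝ g x)) x := by
  obtain ⟨U, hU⟩ := hg.2 x
  have hg' : HasFDerivAt g (fderiv ℝ g x) x := (hg.1.differentiable (by simp) x).hasFDerivAt
  have h1 : HasFDerivAt Ring.inverse
      (-ContinuousLinearMap.mulLeftRight ℝ A (↑U⁻¹) (↑U⁻¹)) (g x) :=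
    hU ▸ hasFDerivAt_ringInverse U
  have hinv : (↑U⁻¹ : A) = Ring.inverse (g x) := by rw [← hU, Ring.inverse_unit]
  rw [hinv] at h1
  exact h1.comp x hg'

/-- Key computation: derivative of `y ↦ ⟨α_g(y)v, β_h(y)w⟩`. -/
lemma aux_keyD (B : A →ₗ[ℝ] A →ₗ[ℝ] ℝ)
    (Bbdd : IsBoundedBilinearMap ℝ (fun p : A × A => B p.1 p.2))
    {g h : E → A} (hg : SmoothUnitMap g) (hh : SmoothUnitMap h) (x v w : E) :
    ∃ L : E →L[ℝ] ℝ, HasFDerivAt (fun y => B (alphaD g y v) (betaD h y w)) L x ∧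
      ∀ u, L u =
        B (Ring.inverse (g x) * fderiv ℝ (fderiv ℝ g) x u v) (betaD h x w)
        + B (alphaD g x v) (fderiv ℝ (fderiv ℝ h) x u w * Ring.inverse (h x))
        - B (alphaD g x u * alphaD g x v) (betaD h x w)
        - B (alphaD g x v) (betaD h x w * betaD h x u) := by
  have hgfd : HasFDerivAt (fderiv ℝ g) (fderiv ℝ (fderiv ℝ g) x) x :=
    ((hg.1.fderiv_right (m := 1) (by norm_cast)).differentiable one_ne_zero x).hasFDerivAt
  have hhfd : HasFDerivAt (fderiv ℝ h) (fderiv ℝ (fderiv ℝ h) x) x :=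
    ((hh.1.fderiv_right (m := 1) (by norm_cast)).differentiable one_ne_zero x).hasFDerivAt
  have hgv : HasFDerivAt (fun y => fderiv ℝ g y v) _ x := hgfd.clm_apply (hasFDerivAt_const v x)
  have hhw : HasFDerivAt (fun y => fderiv ℝ h y w) _ x := hhfd.clm_apply (hasFDerivAt_const w x)
  have hα : HasFDerivAt (fun y => alphaD g y v) _ x := (aux_inv_hasFDerivAt hg x).mul' hgv
  have hβ : HasFDerivAt (fun y => betaD h y w) _ x := hhw.mul' (aux_inv_hasFDerivAt hh x)
  have hB : HasFDerivAt (fun y => B (alphaD g y v) (betaD h y w)) _ x :=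
    (Bbdd.hasFDerivAt (alphaD g x v, betaD h x w)).comp (g := fun p : A × A => B p.1 p.2)
      (f := fun y => (alphaD g y v, betaD h y w)) x (HasFDerivAt.prodMk hα hβ)
  refine ⟨_, hB, fun u => ?_⟩
  simp only [ContinuousLinearMap.comp_apply, ContinuousLinearMap.prod_apply,
    IsBoundedBilinearMap.deriv_apply, ContinuousLinearMap.add_apply,
    ContinuousLinearMap.coe_smul', Pi.smul_apply, ContinuousLinearMap.smulRight_apply,
    ContinuousLinearMap.flip_apply, ContinuousLinearMap.coe_comp', Function.comp_apply,
    ContinuousLinearMap.neg_apply, ContinuousLinearMap.mulLeftRight_apply,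
    ContinuousLinearMap.zero_apply, map_add, map_neg, map_smul, LinearMap.add_apply,
    LinearMap.neg_apply, LinearMap.smul_apply, smul_eq_mul, map_zero, add_zero, zero_add,
    map_sub, LinearMap.zero_apply, mul_zero, zero_mul, alphaD, betaD]
  simp only [op_smul_eq_mul, mul_neg, neg_mul, map_neg, LinearMap.neg_apply, mul_assoc]
  ring

lemma aux_fderiv_mul {r b : E → A} (hr : SmoothUnitMap r) (hb : SmoothUnitMap b) (x u : E) :
    fderiv ℝ (r * b) x u = fderiv ℝ r x u * b x + r x * fderiv ℝ b x u := by
  have hr' : HasFDerivAt r (fderiv ℝ r x) x := (hr.1.differentiable (by simp) x).hasFDerivAt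
  have hb' : HasFDerivAt b (fderiv ℝ b x) x := (hb.1.differentiable (by simp) x).hasFDerivAt
  have h : HasFDerivAt (r * b) _ x := hr'.mul' hb'
  rw [h.fderiv]
  simp [smul_eq_mul, add_comm]

lemma aux_alphaD_rb {r b v : E → A} (hr : SmoothUnitMap r) (hb : SmoothUnitMap b)
    (hv : SmoothUnitMap v) (hrel : r * b * v = 1) (x u : E) :
    alphaD (r * b) x u = - betaD v x u := by
  have hr' : HasFDerivAt r (fderiv ℝ r x) x := (hr.1.differentiable (by simp) x).hasFDerivAt
  have hb' : HasFDerivAt b (fderiv ℝ b x) x := (hb.1.differentiable (by simp) x).hasFDerivAt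
  have hv' : HasFDerivAt v (fderiv ℝ v x) x := (hv.1.differentiable (by simp) x).hasFDerivAt
  have hrb : HasFDerivAt (r * b) (fderiv ℝ (r * b) x) x :=
    (hr'.mul' hb').congr_fderiv (hr'.mul' hb').fderiv.symm
  have hprod : HasFDerivAt (fun y => (r y * b y) * v y) _ x := hrb.mul' hv'
  have hone : (fun y => (r y * b y) * v y) = fun _ => (1 : A) := by
    funext y; simpa using congrFun hrel y
  rw [hone] at hprod
  have heq := hprod.unique (hasFDerivAt_const (1 : A) x)
  have heval : fderiv ℝ (r * b) x u * v x + (r x * b x) * fderiv ℝ v x u = 0 := by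
    have := congrFun (congrArg (fun L : E →L[ℝ] A => (L : E → A)) heq) u
    simpa [smul_eq_mul, add_comm] using this
  have hvu : IsUnit (v x) := hv.2 x
  have hrbu : IsUnit (r x * b x) := (hr.2 x).mul (hb.2 x)
  have e1 : fderiv ℝ (r * b) x u * v x = -((r x * b x) * fderiv ℝ v x u) :=
    eq_neg_of_add_eq_zero_left heval
  have e2 : fderiv ℝ (r * b) x u = -((r x * b x) * fderiv ℝ v x u) * Ring.inverse (v x) := by
    rw [← e1, Ring.mul_inverse_cancel_right _ _ hvu]
  show Ring.inverse ((r * b) x) * fderiv ℝ (r * b) x u = -betaD v x u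
  rw [e2, show (r * b) x = r x * b x from rfl, betaD]
  rw [neg_mul, mul_neg, mul_assoc (r x * b x), Ring.inverse_mul_cancel_left _ _ hrbu]

end AuxLemmas

theorem triangle_form_closed
    {E : Type*} [NormedAddCommGroup E] [NormedSpace ℝ E]
    {A : Type*} [NormedRing A] [NormedAlgebra ℝ A] [CompleteSpace A]
    (B : A →ₗ[ℝ] A →ₗ[ℝ] ℝ)
    (Bcont : Continuous fun p : A × A => B p.1 p.2)
    (Bsymm : ∀ x y : A, B x y = B y x)
    (Binv : ∀ x y z : A, B (x * y) z = B x (y * z))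
    (𝔯 𝔟 𝔳 : Submodule ℝ A)
    (h𝔯 : IsIsotropicSubalg B 𝔯) (h𝔟 : IsIsotropicSubalg B 𝔟) (h𝔳 : IsIsotropicSubalg B 𝔳)
    (r b v : E → A)
    (hr : SmoothUnitMap r) (hb : SmoothUnitMap b) (hv : SmoothUnitMap v)
    (hαr : ∀ x u : E, alphaD r x u ∈ 𝔯)
    (hαb : ∀ x u : E, alphaD b x u ∈ 𝔟)
    (hαv : ∀ x u : E, alphaD v x u ∈ 𝔳)
    (hrel : r * b * v = 1) :
    (∀ x u w : E, lamForm B (r * b) v x u w = 0) ∧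
    (∀ x u₀ u₁ u₂ : E,
      extDeriv2 (fun x u w => lamForm B r b x u w + lamForm B (r * b) v x u w) x u₀ u₁ u₂ = 0) := by
  have Bbdd := aux_bdd B Bcont
  have hrbα : ∀ x u : E, alphaD (r * b) x u = -betaD v x u := aux_alphaD_rb hr hb hv hrel
  have part1 : ∀ x u w : E, lamForm B (r * b) v x u w = 0 := by
    intro x u w
    simp only [lamForm, hrbα, map_neg, LinearMap.neg_apply]
    rw [Bsymm (betaD v x w) (betaD v x u)]
    ring
  refine ⟨part1, fun x u0 u1 u2 => ?_⟩
  -- abbreviations for units and inverses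
  have hru : IsUnit (r x) := hr.2 x
  have hbu : IsUnit (b x) := hb.2 x
  have hvu : IsUnit (v x) := hv.2 x
  -- the second term of the form vanishes
  have hfun : ∀ p q : E, (fun y => lamForm B r b y p q + lamForm B (r * b) v y p q)
      = fun y => (1 / 2 : ℝ) * (B (alphaD r y p) (betaD b y q) - B (alphaD r y q) (betaD b y p)) := by
    intro p q; funext y; rw [part1, add_zero]; rfl
  simp only [extDeriv2]
  rw [hfun u1 u2, hfun u0 u2, hfun u0 u1]
  -- compute the three derivatives
  obtain ⟨L12, hL12, e12⟩ := aux_keyD B Bbdd hr hb x u1 u2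
  obtain ⟨L21, hL21, e21⟩ := aux_keyD B Bbdd hr hb x u2 u1
  obtain ⟨L02, hL02, e02⟩ := aux_keyD B Bbdd hr hb x u0 u2
  obtain ⟨L20, hL20, e20⟩ := aux_keyD B Bbdd hr hb x u2 u0
  obtain ⟨L01, hL01, e01⟩ := aux_keyD B Bbdd hr hb x u0 u1
  obtain ⟨L10, hL10, e10⟩ := aux_keyD B Bbdd hr hb x u1 u0
  have hd1 : HasFDerivAt
      (fun y => (1 / 2 : ℝ) * (B (alphaD r y u1) (betaD b y u2) - B (alphaD r y u2) (betaD b y u1)))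
      ((1 / 2 : ℝ) • (L12 - L21)) x := (hL12.sub hL21).const_mul (1 / 2)
  have hd2 : HasFDerivAt
      (fun y => (1 / 2 : ℝ) * (B (alphaD r y u0) (betaD b y u2) - B (alphaD r y u2) (betaD b y u0)))
      ((1 / 2 : ℝ) • (L02 - L20)) x := (hL02.sub hL20).const_mul (1 / 2)
  have hd3 : HasFDerivAt
      (fun y => (1 / 2 : ℝ) * (B (alphaD r y u0) (betaD b y u1) - B (alphaD r y u1) (betaD b y u0)))
      ((1 / 2 : ℝ) • (L01 - L10)) x := (hL01.sub hL10).const_mul (1 / 2)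
  rw [hd1.fderiv, hd2.fderiv, hd3.fderiv]
  simp only [ContinuousLinearMap.smul_apply, ContinuousLinearMap.sub_apply, smul_eq_mul]
  rw [e12 u0, e21 u0, e02 u1, e20 u1, e01 u2, e10 u2]
  -- symmetry of second derivatives
  have hsymr : ∀ p q : E, fderiv ℝ (fderiv ℝ r) x p q = fderiv ℝ (fderiv ℝ r) x q p :=
    fun p q => second_derivative_symmetric
      (fun y => ((hr.1.differentiable (by simp)) y).hasFDerivAt)
      (((hr.1.fderiv_right (m := 1) (by norm_cast)).differentiable one_ne_zero x).hasFDerivAt) p q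
  have hsymb : ∀ p q : E, fderiv ℝ (fderiv ℝ b) x p q = fderiv ℝ (fderiv ℝ b) x q p :=
    fun p q => second_derivative_symmetric
      (fun y => ((hb.1.differentiable (by simp)) y).hasFDerivAt)
      (((hb.1.fderiv_right (m := 1) (by norm_cast)).differentiable one_ne_zero x).hasFDerivAt) p q
  have hP1 : B (Ring.inverse (r x) * fderiv ℝ (fderiv ℝ r) x u0 u1) (betaD b x u2)
      = B (Ring.inverse (r x) * fderiv ℝ (fderiv ℝ r) x u1 u0) (betaD b x u2) := by
    rw [hsymr u0 u1]
  have hP2 : B (Ring.inverse (r x) * fderiv ℝ (fderiv ℝ r) x u0 u2) (betaD b x u1)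
      = B (Ring.inverse (r x) * fderiv ℝ (fderiv ℝ r) x u2 u0) (betaD b x u1) := by
    rw [hsymr u0 u2]
  have hP3 : B (Ring.inverse (r x) * fderiv ℝ (fderiv ℝ r) x u1 u2) (betaD b x u0)
      = B (Ring.inverse (r x) * fderiv ℝ (fderiv ℝ r) x u2 u1) (betaD b x u0) := by
    rw [hsymr u1 u2]
  have hQ1 : B (alphaD r x u1) (fderiv ℝ (fderiv ℝ b) x u0 u2 * Ring.inverse (b x))
      = B (alphaD r x u1) (fderiv ℝ (fderiv ℝ b) x u2 u0 * Ring.inverse (b x)) := by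
    rw [hsymb u0 u2]
  have hQ2 : B (alphaD r x u2) (fderiv ℝ (fderiv ℝ b) x u0 u1 * Ring.inverse (b x))
      = B (alphaD r x u2) (fderiv ℝ (fderiv ℝ b) x u1 u0 * Ring.inverse (b x)) := by
    rw [hsymb u0 u1]
  have hQ3 : B (alphaD r x u0) (fderiv ℝ (fderiv ℝ b) x u1 u2 * Ring.inverse (b x))
      = B (alphaD r x u0) (fderiv ℝ (fderiv ℝ b) x u2 u1 * Ring.inverse (b x)) := by
    rw [hsymb u1 u2]
  -- the algebraic identity X + Y = 0
  -- z1 : ⟨[a₀,a₁], a₂⟩ = 0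
  have z1 : B (alphaD r x u0 * alphaD r x u1) (alphaD r x u2)
      = B (alphaD r x u1 * alphaD r x u0) (alphaD r x u2) := by
    have h := h𝔯.2 _ (h𝔯.1 _ (hαr x u0) _ (hαr x u1)) _ (hαr x u2)
    rw [map_sub, LinearMap.sub_apply, sub_eq_zero] at h
    exact h
  -- c-conjugation facts
  have hc : ∀ p : E, betaD b x p = b x * alphaD b x p * Ring.inverse (b x) := by
    intro p
    simp only [alphaD, betaD, mul_assoc, Ring.mul_inverse_cancel_left _ _ hbu]
  have hcc : ∀ p q : E, betaD b x p * betaD b x q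
      = b x * (alphaD b x p * alphaD b x q) * Ring.inverse (b x) := by
    intro p q
    simp only [alphaD, betaD, mul_assoc, Ring.mul_inverse_cancel_left _ _ hbu]
  have hbinv : Ring.inverse (b x) * b x = 1 := Ring.inverse_mul_cancel _ hbu
  have z2 : B (betaD b x u0 * betaD b x u1) (betaD b x u2)
      = B (betaD b x u1 * betaD b x u0) (betaD b x u2) := by
    rw [hcc u0 u1, hcc u1 u0, hc u2, aux_conj B Bsymm Binv hbinv, aux_conj B Bsymm Binv hbinv]
    have h := h𝔟.2 _ (h𝔟.1 _ (hαb x u0) _ (hαb x u1)) _ (hαb x u2)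
    rw [map_sub, LinearMap.sub_apply, sub_eq_zero] at h
    exact h
  -- the triangle relation: a_p + c_p = -(G m_p Gi)
  have hinvrb : Ring.inverse (r x * b x) = Ring.inverse (b x) * Ring.inverse (r x) := by
    obtain ⟨Ur, hUr⟩ := hr.2 x
    obtain ⟨Ub, hUb⟩ := hb.2 x
    rw [← hUr, ← hUb, ← Units.val_mul, Ring.inverse_unit, Ring.inverse_unit, Ring.inverse_unit,
      mul_inv_rev, Units.val_mul]
  have hac : ∀ p : E, alphaD r x p + betaD b x p
      = -((b x * v x) * alphaD v x p * (Ring.inverse (v x) * Ring.inverse (b x))) := by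
    intro p
    have s1 : alphaD r x p + betaD b x p = b x * alphaD (r * b) x p * Ring.inverse (b x) := by
      show alphaD r x p + betaD b x p
        = b x * (Ring.inverse ((r * b) x) * fderiv ℝ (r * b) x p) * Ring.inverse (b x)
      rw [show (r * b) x = r x * b x from rfl, hinvrb, aux_fderiv_mul hr hb x p]
      simp only [alphaD, betaD, mul_add, add_mul, mul_assoc,
        Ring.mul_inverse_cancel_left _ _ hbu, Ring.inverse_mul_cancel_left _ _ hru,
        Ring.mul_inverse_cancel _ hbu, mul_one]
    rw [s1, hrbα x p]
    simp only [alphaD, betaD, mul_neg, neg_mul, mul_assoc,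
      Ring.mul_inverse_cancel_left _ _ hvu]
  -- the isotropy relation for 𝔳 transported by conjugation
  have hGiG : (Ring.inverse (v x) * Ring.inverse (b x)) * (b x * v x) = 1 := by
    rw [mul_assoc, Ring.inverse_mul_cancel_left _ _ hbu, Ring.inverse_mul_cancel _ hvu]
  have hGiG' : ∀ z : A, (Ring.inverse (v x) * Ring.inverse (b x)) * ((b x * v x) * z) = z := by
    intro z; rw [← mul_assoc, hGiG, one_mul]
  have hcomm : (-((b x * v x) * alphaD v x u0 * (Ring.inverse (v x) * Ring.inverse (b x))))
        * (-((b x * v x) * alphaD v x u1 * (Ring.inverse (v x) * Ring.inverse (b x))))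
      - (-((b x * v x) * alphaD v x u1 * (Ring.inverse (v x) * Ring.inverse (b x))))
        * (-((b x * v x) * alphaD v x u0 * (Ring.inverse (v x) * Ring.inverse (b x))))
      = (b x * v x) * (alphaD v x u0 * alphaD v x u1 - alphaD v x u1 * alphaD v x u0)
        * (Ring.inverse (v x) * Ring.inverse (b x)) := by
    simp only [neg_mul, mul_neg, neg_neg, mul_sub, sub_mul, mul_assoc,
      Ring.inverse_mul_cancel_left _ _ hbu, Ring.inverse_mul_cancel_left _ _ hvu]
  have hE : B ((alphaD r x u0 + betaD b x u0) * (alphaD r x u1 + betaD b x u1)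
        - (alphaD r x u1 + betaD b x u1) * (alphaD r x u0 + betaD b x u0))
      (alphaD r x u2 + betaD b x u2) = 0 := by
    rw [hac u0, hac u1, hac u2, hcomm, map_neg, aux_conj B Bsymm Binv hGiG]
    rw [h𝔳.2 _ (h𝔳.1 _ (hαv x u0) _ (hαv x u1)) _ (hαv x u2)]
    ring
  -- expand and convert the cross terms
  simp only [mul_add, add_mul, map_sub, map_add, LinearMap.sub_apply, LinearMap.add_apply] at hE
  have hc1 : B (alphaD r x u0 * betaD b x u1) (alphaD r x u2)
      = B (alphaD r x u2 * alphaD r x u0) (betaD b x u1) := by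
    rw [aux_cyc B Bsymm Binv, aux_cyc B Bsymm Binv]
  have hc2 : B (betaD b x u0 * alphaD r x u1) (alphaD r x u2)
      = B (alphaD r x u1 * alphaD r x u2) (betaD b x u0) := aux_cyc B Bsymm Binv _ _ _
  have hc3 : B (alphaD r x u1 * betaD b x u0) (alphaD r x u2)
      = B (alphaD r x u2 * alphaD r x u1) (betaD b x u0) := by
    rw [aux_cyc B Bsymm Binv, aux_cyc B Bsymm Binv]
  have hc4 : B (betaD b x u1 * alphaD r x u0) (alphaD r x u2)
      = B (alphaD r x u0 * alphaD r x u2) (betaD b x u1) := aux_cyc B Bsymm Binv _ _ _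
  have hc5 : B (alphaD r x u0 * betaD b x u1) (betaD b x u2)
      = B (alphaD r x u0) (betaD b x u1 * betaD b x u2) := Binv _ _ _
  have hc6 : B (betaD b x u0 * alphaD r x u1) (betaD b x u2)
      = B (alphaD r x u1) (betaD b x u2 * betaD b x u0) := by
    rw [aux_cyc B Bsymm Binv, Binv]
  have hc7 : B (alphaD r x u1 * betaD b x u0) (betaD b x u2)
      = B (alphaD r x u1) (betaD b x u0 * betaD b x u2) := Binv _ _ _
  have hc8 : B (betaD b x u1 * alphaD r x u0) (betaD b x u2)
      = B (alphaD r x u0) (betaD b x u2 * betaD b x u1) := by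
    rw [aux_cyc B Bsymm Binv, Binv]
  have hc9 : B (betaD b x u0 * betaD b x u1) (alphaD r x u2)
      = B (alphaD r x u2) (betaD b x u0 * betaD b x u1) := Bsymm _ _
  have hc10 : B (betaD b x u1 * betaD b x u0) (alphaD r x u2)
      = B (alphaD r x u2) (betaD b x u1 * betaD b x u0) := Bsymm _ _
  rw [hc1, hc2, hc3, hc4, hc5, hc6, hc7, hc8, hc9, hc10, z1] at hE
  -- note: z2 is in terms converted by hc9/hc10? z2 is about B (c0*c1) c2 which stays.
  linarith [hE, z2]
end

section
/- Lagrangian image from a self-dual exact sequence (the linear-algebra core of the theorem that the set of flat connections extendable to a painted body is a Lagrangian submanifold of the moduli space): let V be a finite-dimensional real vector space with a nondegenerate alternating bilinear form ω, let W and U be real vector spaces, let f : W → V and g : V → U be linear maps with range f = ker g, and suppose there is an injective linear map φ : U → W* (the dual space of W) such that φ(g(v))(w) = ω(v, f(w)) for all v ∈ V and w ∈ W. Then range f is a Lagrangian subspace of (V, ω), i.e. range f = { v ∈ V : ω(v, f(w)) = 0 for all w ∈ W }, which is the ω-orthogonal complement of range f. -/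
/-!
STATEMENT 12: Lagrangian image from a self-dual exact sequence: if `V` is a
finite-dimensional real symplectic vector space, `f : W → V`, `g : V → U` are linear with
`range f = ker g`, and `φ : U → W*` is injective linear with `φ(g v)(w) = ω(v, f w)`, then
`range f` is Lagrangian: `range f = {v : V | ∀ w, ω v (f w) = 0}`, the `ω`-orthogonal
complement of `range f`.
-/

theorem lagrangian_of_selfdual_sequence
    {V W U : Type*} [AddCommGroup V] [Module ℝ V] [FiniteDimensional ℝ V]
    [AddCommGroup W] [Module ℝ W] [AddCommGroup U] [Module ℝ U]
    (ω : V →ₗ[ℝ] V →ₗ[ℝ] ℝ)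
    (ω_alt : ∀ v : V, ω v v = 0)
    (ω_nondeg : ∀ v : V, (∀ u : V, ω v u = 0) → v = 0)
    (f : W →ₗ[ℝ] V) (g : V →ₗ[ℝ] U)
    (h_exact : LinearMap.range f = LinearMap.ker g)
    (φ : U →ₗ[ℝ] Module.Dual ℝ W) (hφ : Function.Injective φ)
    (hcompat : ∀ (v : V) (w : W), φ (g v) w = ω v (f w)) :
    (LinearMap.range f : Set V) = {v : V | ∀ w : W, ω v (f w) = 0} := by
  ext v
  constructor
  · rintro ⟨w₀, rfl⟩ w
    have hker : g (f w₀) = 0 := by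
      have : f w₀ ∈ LinearMap.ker g := h_exact ▸ LinearMap.mem_range_self f w₀
      exact this
    have := hcompat (f w₀) w
    rw [hker] at this
    simpa using this.symm
  · intro hv
    have hgv : g v = 0 := by
      apply hφ
      ext w
      simp [hcompat v w, hv w]
    have : v ∈ LinearMap.ker g := hgv
    rw [← h_exact] at this
    exact this
end
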